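/- Let (X, μ) be a measure space with μ finite, let k : X → ℕ be measurable with k(x) ≥ 1 for all x, let t_j : X → ℕ (j ∈ ℕ) be measurable with t_0(x) = 0 and t_{j-1}(x) < t_j(x) for all j ≥ 1 and all x. Assume there is a sequence (v_n)_{n≥1} of nonnegative reals such that for every j ≥ 1, every n ≥ 1 and every tuple of naturals (n_1, …, n_{j-1}), one has μ{x : t_i(x) = n_i for all 1 ≤ i ≤ j-1, and t_j(x) − t_{j-1}(x) = n} ≤ v_n·μ{x : t_i(x) = n_i for all 1 ≤ i ≤ j-1}. Then for every m ≥ 1, every nonempty finite set A ⊆ {1, …, m}, and every family of naturals (n_j)_{j∈A} with n_j ≥ 1, one has μ{x : k(x) ≥ max A and t_j(x) − t_{j-1}(x) = n_j for all j ∈ A} ≤ (∏_{j∈A} v_{n_j})·μ(X). -/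

import Mathlib

open MeasureTheory

lemma key_gap_bound
    {X : Type*} [MeasurableSpace X] (μ : Measure X) [IsFiniteMeasure μ]
    (t : ℕ → X → ℕ) (ht : ∀ j, Measurable (t j)) (ht0 : ∀ x, t 0 x = 0)
    (v : ℕ → ℝ)
    (hgap' : ∀ j : ℕ, 1 ≤ j → ∀ n : ℕ, 1 ≤ n → ∀ ν : ℕ → ℕ,
      μ {x | (∀ i, 1 ≤ i → i ≤ j - 1 → t i x = ν i) ∧ t j x - t (j - 1) x = n} ≤
        ENNReal.ofReal (v n) * μ {x | ∀ i, 1 ≤ i → i ≤ j - 1 → t i x = ν i}) :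
    ∀ A : Finset ℕ, (∀ j ∈ A, 1 ≤ j) → ∀ n : ℕ → ℕ, (∀ j ∈ A, 1 ≤ n j) →
      μ {x | ∀ j ∈ A, t j x - t (j - 1) x = n j} ≤
        (∏ j ∈ A, ENNReal.ofReal (v (n j))) * μ Set.univ := by
  intro A
  induction A using Finset.strongInduction with
  | _ A ih =>
  intro h1 n hn
  classical
  rcases A.eq_empty_or_nonempty with rfl | hA
  · simp
  · set J := A.max' hA with hJdef
    have hJmem : J ∈ A := A.max'_mem hA
    have hJ1 : 1 ≤ J := h1 J hJmem
    set B := A.erase J with hBdef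
    have hBsub : B ⊂ A := Finset.erase_ssubset hJmem
    -- measurability of gap sets
    have hGmeas : ∀ j : ℕ, MeasurableSet {x | t j x - t (j - 1) x = n j} := by
      intro j
      exact ((ht j).sub (ht (j - 1))) (measurableSet_singleton (n j))
    set SB : Set X := {x | ∀ j ∈ B, t j x - t (j - 1) x = n j} with hSBdef
    have hSBmeas : MeasurableSet SB := by
      have : SB = ⋂ j ∈ B, {x | t j x - t (j - 1) x = n j} := by
        ext x; simp [hSBdef]
      rw [this]
      exact MeasurableSet.biInter B.countable_toSet fun j _ => hGmeas j
    set S : Set X := {x | ∀ j ∈ A, t j x - t (j - 1) x = n j} with hSdef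
    -- the fiber machinery
    set ι := ({ i // i ∈ Finset.Icc 1 (J - 1) } → ℕ) with hιdef
    set ext : ι → ℕ → ℕ := fun d i => if h : i ∈ Finset.Icc 1 (J - 1) then d ⟨i, h⟩ else 0
      with hextdef
    set fiber : ι → Set X := fun d => {x | ∀ i, 1 ≤ i → i ≤ J - 1 → t i x = ext d i}
      with hfiberdef
    have hext_eval : ∀ (d : ι) (i : ℕ) (h : i ∈ Finset.Icc 1 (J - 1)), ext d i = d ⟨i, h⟩ := by
      intro d i h; simp only [hextdef]; rw [dif_pos h]
    have hext0 : ∀ d : ι, ext d 0 = 0 := by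
      intro d; simp [hextdef, Finset.mem_Icc]
    have hfibermeas : ∀ d, MeasurableSet (fiber d) := by
      intro d
      have : fiber d = ⋂ i ∈ Finset.Icc 1 (J - 1), (t i) ⁻¹' {ext d i} := by
        ext x; simp [hfiberdef, Finset.mem_Icc]
      rw [this]
      exact MeasurableSet.biInter (Finset.Icc 1 (J - 1)).countable_toSet
        fun i _ => (ht i) (measurableSet_singleton _)
    -- every point is in some fiber
    have hcover : ∀ x : X, x ∈ fiber (fun i => t i.1 x) := by
      intro x i hi1 hi2
      exact (hext_eval (fun i => t i.1 x) i (Finset.mem_Icc.mpr ⟨hi1, hi2⟩)).symm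
    -- values of t on a fiber
    have hfib_eval : ∀ d : ι, ∀ x ∈ fiber d, ∀ i, i ≤ J - 1 → t i x = ext d i := by
      intro d x hx i hi
      rcases Nat.eq_zero_or_pos i with h0 | hpos
      · subst h0; rw [ht0 x, hext0]
      · exact hx i hpos hi
    -- gaps on B are determined on each fiber
    have hgapdet : ∀ d : ι, ∀ x ∈ fiber d, ∀ j ∈ B,
        t j x - t (j - 1) x = ext d j - ext d (j - 1) := by
      intro d x hx j hj
      have hjA : j ∈ A := Finset.mem_of_mem_erase hj
      have hjJ : j ≠ J := Finset.ne_of_mem_erase hj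
      have hjle : j ≤ J - 1 := by
        have := A.le_max' j hjA
        omega
      rw [hfib_eval d x hx j hjle, hfib_eval d x hx (j - 1) (by omega)]
    -- fibers are pairwise disjoint
    have hdisj : Pairwise (Function.onFun Disjoint fiber) := by
      intro d e hde
      rw [Function.onFun, Set.disjoint_left]
      intro x hxd hxe
      apply hde
      funext i
      have hi := i.2
      rw [Finset.mem_Icc] at hi
      have h1 := hfib_eval d x hxd i.1 hi.2
      have h2 := hfib_eval e x hxe i.1 hi.2
      rw [hext_eval d i.1 i.2] at h1
      rw [hext_eval e i.1 i.2] at h2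
      rw [← h1, ← h2]
    -- decomposition of SB
    have hSB_decomp : μ SB = ∑' d : ι, μ (fiber d ∩ SB) := by
      have hU : SB = ⋃ d : ι, (fiber d ∩ SB) := by
        ext x
        constructor
        · intro hx
          exact Set.mem_iUnion.mpr ⟨fun i => t i.1 x, hcover x, hx⟩
        · rintro hx
          rcases Set.mem_iUnion.mp hx with ⟨d, _, hx2⟩
          exact hx2
      conv_lhs => rw [hU]
      exact measure_iUnion
        (fun d e hde => Set.disjoint_of_subset Set.inter_subset_left Set.inter_subset_left
          (hdisj hde))
        (fun d => (hfibermeas d).inter hSBmeas)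
    -- main chain
    calc μ S ≤ ∑' d : ι, μ (S ∩ fiber d) := by
          refine le_trans (measure_mono ?_) (measure_iUnion_le _)
          intro x hx
          exact Set.mem_iUnion.mpr ⟨fun i => t i.1 x, hx, hcover x⟩
      _ ≤ ∑' d : ι, ENNReal.ofReal (v (n J)) * μ (fiber d ∩ SB) := by
          refine ENNReal.tsum_le_tsum fun d => ?_
          by_cases hP : ∀ j ∈ B, ext d j - ext d (j - 1) = n j
          · -- fiber compatible with B
            have hfibSB : fiber d ⊆ SB := by
              intro x hx j hj
              rw [hgapdet d x hx j hj]
              exact hP j hj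
            have h1' : S ∩ fiber d ⊆
                {x | (∀ i, 1 ≤ i → i ≤ J - 1 → t i x = ext d i) ∧
                  t J x - t (J - 1) x = n J} := by
              rintro x ⟨hxS, hxf⟩
              exact ⟨hxf, hxS J hJmem⟩
            have h2' : {x | ∀ i, 1 ≤ i → i ≤ J - 1 → t i x = ext d i} = fiber d := rfl
            calc μ (S ∩ fiber d) ≤
                μ {x | (∀ i, 1 ≤ i → i ≤ J - 1 → t i x = ext d i) ∧
                  t J x - t (J - 1) x = n J} := measure_mono h1'
              _ ≤ ENNReal.ofReal (v (n J)) * μ (fiber d) := by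
                  rw [← h2']
                  exact hgap' J hJ1 (n J) (hn J hJmem) (ext d)
              _ = ENNReal.ofReal (v (n J)) * μ (fiber d ∩ SB) := by
                  rw [Set.inter_eq_left.mpr hfibSB]
          · -- fiber incompatible: intersection with S is empty
            have : S ∩ fiber d = ∅ := by
              ext x
              simp only [Set.mem_inter_iff, Set.mem_empty_iff_false, iff_false, not_and]
              intro hxS hxf
              apply hP
              intro j hj
              rw [← hgapdet d x hxf j hj]
              exact hxS j (Finset.mem_of_mem_erase hj)
            rw [this, measure_empty]
            exact zero_le
      _ = ENNReal.ofReal (v (n J)) * μ SB := by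
          rw [ENNReal.tsum_mul_left, hSB_decomp]
      _ ≤ ENNReal.ofReal (v (n J)) *
            ((∏ j ∈ B, ENNReal.ofReal (v (n j))) * μ Set.univ) := by
          refine mul_le_mul_right ?_ _
          exact ih B hBsub (fun j hj => h1 j (Finset.mem_of_mem_erase hj)) n
            (fun j hj => hn j (Finset.mem_of_mem_erase hj))
      _ = (∏ j ∈ A, ENNReal.ofReal (v (n j))) * μ Set.univ := by
          rw [← mul_assoc, hBdef]
          exact congrArg (· * μ Set.univ)
            (Finset.mul_prod_erase A (fun j => ENNReal.ofReal (v (n j))) hJmem)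

theorem product_bound_on_gaps
    {X : Type*} [MeasurableSpace X] (μ : Measure X) [IsFiniteMeasure μ]
    (k : X → ℕ) (hk : Measurable k) (hk1 : ∀ x, 1 ≤ k x)
    (t : ℕ → X → ℕ) (ht : ∀ j, Measurable (t j))
    (ht0 : ∀ x, t 0 x = 0) (htmono : ∀ j : ℕ, 1 ≤ j → ∀ x, t (j - 1) x < t j x)
    (v : ℕ → ℝ) (hv : ∀ n, 1 ≤ n → 0 ≤ v n)
    (hgap : ∀ j : ℕ, 1 ≤ j → ∀ n : ℕ, 1 ≤ n → ∀ ν : ℕ → ℕ,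
      (μ {x | (∀ i, 1 ≤ i → i ≤ j - 1 → t i x = ν i) ∧
          t j x - t (j - 1) x = n}).toReal ≤
        v n * (μ {x | ∀ i, 1 ≤ i → i ≤ j - 1 → t i x = ν i}).toReal)
    (m : ℕ) (hm : 1 ≤ m) (A : Finset ℕ) (hA : A.Nonempty) (hAm : A ⊆ Finset.Icc 1 m)
    (n : ℕ → ℕ) (hn : ∀ j ∈ A, 1 ≤ n j) :
    (μ {x | A.max' hA ≤ k x ∧ ∀ j ∈ A, t j x - t (j - 1) x = n j}).toReal ≤
      (∏ j ∈ A, v (n j)) * (μ Set.univ).toReal := by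
  have hgap' : ∀ j : ℕ, 1 ≤ j → ∀ nn : ℕ, 1 ≤ nn → ∀ ν : ℕ → ℕ,
      μ {x | (∀ i, 1 ≤ i → i ≤ j - 1 → t i x = ν i) ∧ t j x - t (j - 1) x = nn} ≤
        ENNReal.ofReal (v nn) * μ {x | ∀ i, 1 ≤ i → i ≤ j - 1 → t i x = ν i} := by
    intro j hj nn hnn ν
    have h := hgap j hj nn hnn ν
    rw [← ENNReal.toReal_le_toReal (measure_ne_top _ _)
      (ENNReal.mul_ne_top ENNReal.ofReal_ne_top (measure_ne_top _ _)),
      ENNReal.toReal_mul, ENNReal.toReal_ofReal (hv nn hnn)]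
    exact h
  have h1 : ∀ j ∈ A, 1 ≤ j := fun j hj => (Finset.mem_Icc.mp (hAm hj)).1
  have key := key_gap_bound μ t ht ht0 v hgap' A h1 n hn
  have hsub : {x | A.max' hA ≤ k x ∧ ∀ j ∈ A, t j x - t (j - 1) x = n j} ⊆
      {x | ∀ j ∈ A, t j x - t (j - 1) x = n j} := fun x hx => hx.2
  have hle := (measure_mono hsub).trans key
  have hRne : (∏ j ∈ A, ENNReal.ofReal (v (n j))) * μ Set.univ ≠ ⊤ := by
    refine ENNReal.mul_ne_top ?_ (measure_ne_top _ _)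
    exact (ENNReal.prod_lt_top fun j _ => ENNReal.ofReal_lt_top).ne
  calc (μ {x | A.max' hA ≤ k x ∧ ∀ j ∈ A, t j x - t (j - 1) x = n j}).toReal
      ≤ ((∏ j ∈ A, ENNReal.ofReal (v (n j))) * μ Set.univ).toReal :=
        ENNReal.toReal_le_toReal (measure_ne_top _ _) hRne |>.mpr hle
    _ = (∏ j ∈ A, v (n j)) * (μ Set.univ).toReal := by
        rw [ENNReal.toReal_mul, ENNReal.toReal_prod]
        congr 1
        exact Finset.prod_congr rfl fun j hj => ENNReal.toReal_ofReal (hv (n j) (hn j hj))
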